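/- Let m ≥ 2, let B be a blocker in CK(2m), and let l be an integer with 1 ≤ l ≤ m. Then B contains exactly one edge of the parallel class M_l = {{i,j} : i ≠ j, i + j ≡ 2l−1 (mod 2m)}. -/
import Mathlib


def inArc (n : ℕ) (a b z : ZMod n) : Prop :=
  0 < (z - a).val ∧ (z - a).val < (b - a).val

def Cross (n : ℕ) (e f : Sym2 (ZMod n)) : Prop :=
  ∃ a b c d : ZMod n, e = s(a, b) ∧ f = s(c, d) ∧
    a ≠ b ∧ a ≠ c ∧ a ≠ d ∧ b ≠ c ∧ b ≠ d ∧ c ≠ d ∧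
    Xor' (inArc n a b c) (inArc n a b d)

def IsSPM (m : ℕ) (M : Finset (Sym2 (ZMod (2 * m)))) : Prop :=
  M.card = m ∧
  (∀ e ∈ M, ¬ e.IsDiag) ∧
  (∀ v : ZMod (2 * m), ∃! e, e ∈ M ∧ v ∈ e) ∧
  (∀ e ∈ M, ∀ f ∈ M, ¬ Cross (2 * m) e f)

def IsBlockingSet (m : ℕ) (B : Set (Sym2 (ZMod (2 * m)))) : Prop :=
  (∀ e ∈ B, ¬ e.IsDiag) ∧
  ∀ M : Finset (Sym2 (ZMod (2 * m))), IsSPM m M → ∃ e ∈ M, e ∈ B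

def IsBlocker (m : ℕ) (B : Finset (Sym2 (ZMod (2 * m)))) : Prop :=
  IsBlockingSet m (B : Set (Sym2 (ZMod (2 * m)))) ∧ B.card = m

def IsBoundaryEdge (m : ℕ) (e : Sym2 (ZMod (2 * m))) : Prop :=
  ∃ i : ZMod (2 * m), e = s(i, i + 1)

def edgeOrder {n : ℕ} (e : Sym2 (ZMod n)) : ℕ :=
  Sym2.lift ⟨fun i j => min (i - j).val (j - i).val, fun i j => min_comm _ _⟩ e

def edgeSum {n : ℕ} (e : Sym2 (ZMod n)) : ZMod n :=
  Sym2.lift ⟨fun i j => i + j, fun i j => add_comm i j⟩ e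

lemma edgeSum_mk {n : ℕ} (a b : ZMod n) : edgeSum s(a, b) = a + b := by
  simp [edgeSum]

lemma inArc_iff_of_sum {n : ℕ} [NeZero n] {a b c d : ZMod n}
    (hsum : a + b = c + d) (hab : a ≠ b) (hca : c ≠ a) (hbc : b ≠ c) :
    inArc n a b c ↔ inArc n a b d := by
  have hd : d - a = b - c := by linear_combination -hsum
  have hx0 : (c - a).val ≠ 0 := by
    rw [Ne, ZMod.val_eq_zero, sub_eq_zero]; exact hca
  have hy0 : (b - c).val ≠ 0 := by
    rw [Ne, ZMod.val_eq_zero, sub_eq_zero]; exact hbc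
  have hxn : (c - a).val < n := ZMod.val_lt _
  have hyn : (b - c).val < n := ZMod.val_lt _
  have key : (b - a).val = ((c - a).val + (b - c).val) % n := by
    have h1 : b - a = (c - a) + (b - c) := by ring
    rw [h1, ZMod.val_add]
  simp only [inArc, hd]
  rcases lt_or_ge ((c - a).val + (b - c).val) n with hc' | hc'
  · rw [Nat.mod_eq_of_lt hc'] at key; omega
  · have h2 : ((c - a).val + (b - c).val) % n = (c - a).val + (b - c).val - n := by
      rw [Nat.mod_eq_sub_mod hc', Nat.mod_eq_of_lt (by omega)]
    rw [h2] at key; omega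

lemma not_cross_of_sum_eq {n : ℕ} [NeZero n] {e f : Sym2 (ZMod n)}
    (h : edgeSum e = edgeSum f) : ¬ Cross n e f := by
  rintro ⟨a, b, c, d, rfl, rfl, hab, hac, had, hbc, hbd, hcd, hx⟩
  have hsum : a + b = c + d := by
    rw [edgeSum_mk, edgeSum_mk] at h; exact h
  have hiff := inArc_iff_of_sum hsum hab (Ne.symm hac) hbc
  rcases hx with ⟨h1, h2⟩ | ⟨h1, h2⟩
  · exact h2 (hiff.mp h1)
  · exact h2 (hiff.mpr h1)

lemma pclass_isSPM {m : ℕ} (hm : m ≠ 0) (c : ZMod (2 * m)) (hc : c.val % 2 = 1)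
    (M : Finset (Sym2 (ZMod (2 * m))))
    (hM : ∀ e, e ∈ M ↔ ¬ e.IsDiag ∧ edgeSum e = c) :
    IsSPM m M := by
  haveI : NeZero (2 * m) := ⟨by omega⟩
  classical
  have hni : ∀ i : ZMod (2 * m), i ≠ c - i := by
    intro i h
    have h2 : i + i = c := eq_sub_iff_add_eq.mp h
    have hv : (i + i).val = 2 * (i.val % m) := by
      rw [ZMod.val_add, ← two_mul, Nat.mul_mod_mul_left]
    have h3 := congrArg ZMod.val h2
    rw [hv] at h3
    omega
  have hmem : ∀ i : ZMod (2 * m), s(i, c - i) ∈ M := by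
    intro i
    rw [hM]
    refine ⟨?_, ?_⟩
    · rw [Sym2.mk_isDiag_iff]; exact hni i
    · rw [edgeSum_mk]; ring
  have hrep : ∀ e ∈ M, ∀ v, v ∈ e → e = s(v, c - v) := by
    intro e he v hv
    induction e using Sym2.ind with
    | _ a b =>
      obtain ⟨hd, hs⟩ := (hM _).mp he
      rw [edgeSum_mk] at hs
      rcases Sym2.mem_iff.mp hv with h | h
      · subst h
        have hb : b = c - v := by rw [eq_sub_iff_add_eq, add_comm]; exact hs
        rw [hb]
      · subst h
        have ha : a = c - v := by rw [eq_sub_iff_add_eq]; exact hs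
        rw [ha]
        exact Sym2.eq_swap
  have hcover : ∀ v : ZMod (2 * m), ∃! e, e ∈ M ∧ v ∈ e := by
    intro v
    refine ⟨s(v, c - v), ⟨hmem v, by simp⟩, ?_⟩
    rintro e ⟨he, hv⟩
    exact hrep e he v hv
  have hfib : ∀ e ∈ M, (Finset.univ.filter (fun v => s(v, c - v) = e)).card = 2 := by
    intro e he
    induction e using Sym2.ind with
    | _ a b =>
      obtain ⟨hd, hs⟩ := (hM _).mp he
      rw [edgeSum_mk] at hs
      rw [Sym2.mk_isDiag_iff] at hd
      have hb : b = c - a := by rw [eq_sub_iff_add_eq, add_comm]; exact hs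
      have ha : a = c - b := by rw [eq_sub_iff_add_eq]; exact hs
      have hset : (Finset.univ.filter (fun v => s(v, c - v) = s(a, b))) = {a, b} := by
        ext v
        simp only [Finset.mem_filter, Finset.mem_univ, true_and, Finset.mem_insert,
          Finset.mem_singleton]
        constructor
        · intro h
          rcases Sym2.eq_iff.mp h with ⟨h1, _⟩ | ⟨h1, _⟩
          · exact Or.inl h1
          · exact Or.inr h1
        · rintro (rfl | rfl)
          · exact Sym2.eq_iff.mpr (Or.inl ⟨rfl, hb.symm⟩)
          · exact Sym2.eq_iff.mpr (Or.inr ⟨rfl, ha.symm⟩)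
      rw [hset, Finset.card_insert_of_notMem (by simpa using hd), Finset.card_singleton]
  have hcard : M.card = m := by
    have h1 : (Finset.univ : Finset (ZMod (2 * m))).card =
        ∑ e ∈ M, (Finset.univ.filter (fun v => s(v, c - v) = e)).card :=
      Finset.card_eq_sum_card_fiberwise (fun v _ => hmem v)
    rw [Finset.sum_congr rfl hfib, Finset.card_univ, ZMod.card, Finset.sum_const,
      smul_eq_mul] at h1
    omega
  refine ⟨hcard, fun e he => ((hM e).mp he).1, hcover, fun e he f hf => ?_⟩
  exact not_cross_of_sum_eq (by rw [((hM e).mp he).2, ((hM f).mp hf).2])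

lemma exists_class_edge (m : ℕ) (hm : 2 ≤ m)
    (B : Finset (Sym2 (ZMod (2 * m)))) (hB : IsBlocker m B)
    (k : ℕ) (hk1 : 1 ≤ k) (hkm : k ≤ m) :
    ∃ e, e ∈ B ∧ ¬ e.IsDiag ∧ edgeSum e = ((2 * k - 1 : ℕ) : ZMod (2 * m)) := by
  haveI : NeZero (2 * m) := ⟨by omega⟩
  classical
  set c : ZMod (2 * m) := ((2 * k - 1 : ℕ) : ZMod (2 * m)) with hcdef
  have hcv : c.val = 2 * k - 1 := ZMod.val_cast_of_lt (by omega)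
  have hodd : c.val % 2 = 1 := by omega
  set M : Finset (Sym2 (ZMod (2 * m))) :=
    Finset.univ.filter (fun e => ¬ e.IsDiag ∧ edgeSum e = c) with hMdef
  have hM : ∀ e, e ∈ M ↔ ¬ e.IsDiag ∧ edgeSum e = c := by
    intro e; simp [hMdef]
  have hSPM := pclass_isSPM (by omega) c hodd M hM
  obtain ⟨e, heM, heB⟩ := hB.1.2 M hSPM
  exact ⟨e, heB, (hM e).mp heM⟩

theorem blocker_meets_parallel_class_once (m l : ℕ) (hm : 2 ≤ m)
    (hl1 : 1 ≤ l) (hlm : l ≤ m)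
    (B : Finset (Sym2 (ZMod (2 * m)))) (hB : IsBlocker m B) :
    ∃! e : Sym2 (ZMod (2 * m)),
      e ∈ B ∧ ¬ e.IsDiag ∧ edgeSum e = ((2 * l - 1 : ℕ) : ZMod (2 * m)) := by
  haveI : NeZero (2 * m) := ⟨by omega⟩
  classical
  obtain ⟨e, heB, hed, hes⟩ := exists_class_edge m hm B hB l hl1 hlm
  refine ⟨e, ⟨heB, hed, hes⟩, ?_⟩
  rintro e' ⟨he'B, he'd, he's⟩
  by_contra hne
  have hcast : ∀ k ∈ Finset.Icc 1 m, ∀ k' ∈ Finset.Icc 1 m,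
      ((2 * k - 1 : ℕ) : ZMod (2 * m)) = ((2 * k' - 1 : ℕ) : ZMod (2 * m)) → k = k' := by
    intro k hk k' hk' hE
    simp only [Finset.mem_Icc] at hk hk'
    have h1 : ((2 * k - 1 : ℕ) : ZMod (2 * m)).val = 2 * k - 1 :=
      ZMod.val_cast_of_lt (by omega)
    have h2 : ((2 * k' - 1 : ℕ) : ZMod (2 * m)).val = 2 * k' - 1 :=
      ZMod.val_cast_of_lt (by omega)
    rw [hE] at h1
    omega
  have hlmem : l ∈ Finset.Icc 1 m := Finset.mem_Icc.mpr ⟨hl1, hlm⟩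
  have H : ∀ k ∈ Finset.Icc 1 m, ∃ f, f ∈ B ∧ ¬ f.IsDiag ∧
      edgeSum f = ((2 * k - 1 : ℕ) : ZMod (2 * m)) := by
    intro k hk
    rw [Finset.mem_Icc] at hk
    exact exists_class_edge m hm B hB k hk.1 hk.2
  choose F hFB hFd hFs using H
  let g : ℕ → Sym2 (ZMod (2 * m)) := fun k =>
    if hk : k ∈ Finset.Icc 1 m then (if k = l then e' else F k hk) else e'
  have hgval : ∀ k (hk : k ∈ Finset.Icc 1 m), g k = if k = l then e' else F k hk := by
    intro k hk; simp only [g]; rw [dif_pos hk]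
  have hsum_g : ∀ k ∈ Finset.Icc 1 m, edgeSum (g k) = ((2 * k - 1 : ℕ) : ZMod (2 * m)) := by
    intro k hk
    rw [hgval k hk]
    by_cases hkl : k = l
    · rw [if_pos hkl, hkl]; exact he's
    · rw [if_neg hkl]; exact hFs k hk
  have hmem_g : ∀ k ∈ Finset.Icc 1 m, g k ∈ B.erase e := by
    intro k hk
    rw [Finset.mem_erase]
    constructor
    · intro hEq
      by_cases hkl : k = l
      · apply hne
        rw [← hEq, hgval k hk, if_pos hkl]
      · apply hkl
        apply hcast k hk l hlmem
        rw [← hsum_g k hk, hEq, hes]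
    · rw [hgval k hk]
      by_cases hkl : k = l
      · rw [if_pos hkl]; exact he'B
      · rw [if_neg hkl]; exact hFB k hk
  have hinj : Set.InjOn g (Finset.Icc 1 m) := by
    intro k hk k' hk' hgeq
    have hk1 := Finset.mem_coe.mp hk
    have hk'1 := Finset.mem_coe.mp hk'
    apply hcast k hk1 k' hk'1
    rw [← hsum_g k hk1, ← hsum_g k' hk'1, hgeq]
  have hle := Finset.card_le_card_of_injOn g hmem_g hinj
  rw [Nat.card_Icc, Finset.card_erase_of_mem heB, hB.2] at hle
  omega
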